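/- If f : R → R² is a continuous embedding of the long ray into its square (with coordinate projections π₁, π₂), then at least one of π₁ ∘ f, π₂ ∘ f is cofinal in R; i.e., the direction (0,0) is not realized by any embedding. -/

import Mathlib

open Set Topology
noncomputable section

/-- The first uncountable ordinal ω₁. -/
def omega1 : Ordinal := Ordinal.omega 1

/-- The closed long ray `R = W(ω₁) × [0,1)` with the lexicographic order. -/
def LongRay : Type 1 := {o : Ordinal // o < omega1} ×ₗ (Set.Ico (0:ℝ) 1)

instance : LinearOrder LongRay :=
  inferInstanceAs (LinearOrder ({o : Ordinal // o < omega1} ×ₗ (Set.Ico (0:ℝ) 1)))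

/-- The order topology on the long ray. -/
instance : TopologicalSpace LongRay := Preorder.topology LongRay
instance : OrderTopology LongRay := ⟨rfl⟩

/-- The minimum point `(0,0)` of the long ray. -/
instance : Zero LongRay :=
  ⟨toLex (⟨0, Ordinal.omega_pos 1⟩, ⟨0, by constructor <;> norm_num⟩)⟩

namespace LR

abbrev Ω := {o : Ordinal // o < omega1}
abbrev II := ↥(Set.Ico (0:ℝ) 1)

def fst (x : LongRay) : Ordinal := ((ofLex x).1 : Ordinal)
def snd (x : LongRay) : ℝ := ((ofLex x).2 : ℝ)

lemma fst_lt (x : LongRay) : fst x < omega1 := (ofLex x).1.2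
lemma snd_mem (x : LongRay) : snd x ∈ Set.Ico (0:ℝ) 1 := (ofLex x).2.2

def mk (o : Ordinal) (ho : o < omega1) (t : ℝ) (ht : 0 ≤ t ∧ t < 1) : LongRay :=
  toLex (⟨o, ho⟩, ⟨t, ht⟩)

@[simp] lemma fst_mk (o ho t ht) : fst (mk o ho t ht) = o := rfl
@[simp] lemma snd_mk (o ho t ht) : snd (mk o ho t ht) = t := rfl

lemma le_def (x y : LongRay) :
    x ≤ y ↔ fst x < fst y ∨ (fst x = fst y ∧ snd x ≤ snd y) := by
  have := Prod.Lex.le_iff (x := x) (y := y)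
  constructor
  · intro h
    rcases this.1 h with h1 | ⟨h1, h2⟩
    · exact Or.inl h1
    · exact Or.inr ⟨congrArg Subtype.val h1, h2⟩
  · intro h
    apply this.2
    rcases h with h1 | ⟨h1, h2⟩
    · exact Or.inl h1
    · exact Or.inr ⟨Subtype.ext h1, h2⟩

lemma lt_def (x y : LongRay) :
    x < y ↔ fst x < fst y ∨ (fst x = fst y ∧ snd x < snd y) := by
  have := Prod.Lex.lt_iff (x := x) (y := y)
  constructor
  · intro h
    rcases this.1 h with h1 | ⟨h1, h2⟩
    · exact Or.inl h1
    · exact Or.inr ⟨congrArg Subtype.val h1, h2⟩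
  · intro h
    apply this.2
    rcases h with h1 | ⟨h1, h2⟩
    · exact Or.inl h1
    · exact Or.inr ⟨Subtype.ext h1, h2⟩

lemma ext {x y : LongRay} (h1 : fst x = fst y) (h2 : snd x = snd y) : x = y := by
  have : ofLex x = ofLex y := Prod.ext (Subtype.ext h1) (Subtype.ext h2)
  exact congrArg toLex this

lemma zero_le (x : LongRay) : (0 : LongRay) ≤ x := by
  rw [le_def]
  rcases eq_or_lt_of_le (_root_.zero_le : (0 : Ordinal) ≤ fst x) with h | h
  · exact Or.inr ⟨h.symm ▸ rfl, (snd_mem x).1⟩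
  · exact Or.inl h

lemma exists_gt (x : LongRay) : ∃ y, x < y := by
  have hx := snd_mem x
  refine ⟨mk (fst x) (fst_lt x) ((snd x + 1)/2) ⟨by linarith [hx.1], by linarith [hx.2]⟩, ?_⟩
  rw [lt_def]
  exact Or.inr ⟨rfl, by simp; linarith [hx.2]⟩

lemma exists_rat_between {x y : LongRay} (h : x < y) :
    ∃ z, x < z ∧ z < y ∧ ∃ q : ℚ, snd z = q := by
  rcases (lt_def x y).1 h with h1 | ⟨h1, h2⟩
  · obtain ⟨q, hq1, hq2⟩ := exists_rat_btwn (snd_mem x).2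
    refine ⟨mk (fst x) (fst_lt x) q ⟨le_trans (snd_mem x).1 hq1.le, hq2⟩, ?_, ?_, q, rfl⟩
    · rw [lt_def]; exact Or.inr ⟨rfl, by simpa using hq1⟩
    · rw [lt_def]; exact Or.inl h1
  · obtain ⟨q, hq1, hq2⟩ := exists_rat_btwn h2
    refine ⟨mk (fst x) (fst_lt x) q ⟨le_trans (snd_mem x).1 hq1.le,
        lt_trans hq2 (snd_mem y).2⟩, ?_, ?_, q, rfl⟩
    · rw [lt_def]; exact Or.inr ⟨rfl, by simpa using hq1⟩
    · rw [lt_def]; exact Or.inr ⟨h1, by simpa using hq2⟩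

lemma omega1_eq : omega1 = (Cardinal.aleph 1).ord := by
  rw [omega1, ← Cardinal.ord_aleph]

lemma omega1_isLimit : Order.IsSuccLimit omega1 := Cardinal.isSuccLimit_omega 1

lemma succ_lt {o : Ordinal} (h : o < omega1) : o + 1 < omega1 := by
  rw [Ordinal.add_one_eq_succ]
  exact omega1_isLimit.succ_lt h

/-- Every countable subset of the long ray is bounded above. -/
lemma countable_bddAbove {S : Set LongRay} (hS : S.Countable) : ∃ b, ∀ x ∈ S, x ≤ b := by
  rcases S.eq_empty_or_nonempty with rfl | hne
  · exact ⟨0, fun x hx => absurd hx (by simp)⟩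
  obtain ⟨w, rfl⟩ := hS.exists_eq_range hne
  set β : Ordinal := ⨆ n, fst (w n) with hβ
  have hβlt : β < omega1 := by
    rw [omega1_eq]
    rw [← omega1_eq]; exact Ordinal.iSup_lt_omega_one (fun n => fst_lt (w n))
  refine ⟨mk (β + 1) (succ_lt hβlt) 0 (by constructor <;> norm_num), ?_⟩
  rintro x ⟨n, rfl⟩
  rw [le_def]
  left
  simp only [fst_mk]
  calc fst (w n) ≤ β := Ordinal.le_iSup (fun n => fst (w n)) n
    _ < β + 1 := lt_add_one β

end LR

namespace LR2
open LR

lemma fst_le_of_le {x y : LongRay} (h : x ≤ y) : fst x ≤ fst y := by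
  rcases (le_def x y).1 h with h1 | ⟨h1, _⟩
  exacts [h1.le, h1.le]

lemma snd_le_of_le {x y : LongRay} (h : x ≤ y) (he : fst x = fst y) : snd x ≤ snd y := by
  rcases (le_def x y).1 h with h1 | ⟨_, h2⟩
  · exact absurd he h1.ne
  · exact h2

lemma exists_isLUB {S : Set LongRay} (hne : S.Nonempty) (hbd : BddAbove S) :
    ∃ l, IsLUB S l := by
  obtain ⟨b, hb⟩ := hbd
  set A : Set Ordinal := fst '' S with hA
  have Ane : A.Nonempty := hne.image _
  have Abd : BddAbove A := ⟨fst b, by rintro o ⟨x, hx, rfl⟩; exact fst_le_of_le (hb hx)⟩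
  set β : Ordinal := sSup A with hβ
  have hβub : ∀ x ∈ S, fst x ≤ β := fun x hx => le_csSup Abd ⟨x, hx, rfl⟩
  have hβle : ∀ u, (∀ x ∈ S, x ≤ u) → β ≤ fst u := fun u hu =>
    csSup_le Ane (by rintro o ⟨x, hx, rfl⟩; exact fst_le_of_le (hu x hx))
  have hβlt : β < omega1 := lt_of_le_of_lt (hβle b fun x hx => hb hx) (fst_lt b)
  by_cases hmem : β ∈ A
  · set T : Set ℝ := snd '' {x ∈ S | fst x = β} with hT
    obtain ⟨x0, hx0S, hx0β⟩ := hmem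
    have Tne : T.Nonempty := ⟨snd x0, x0, ⟨hx0S, hx0β⟩, rfl⟩
    have Tbd : BddAbove T := ⟨1, by rintro t ⟨x, _, rfl⟩; exact (snd_mem x).2.le⟩
    set r : ℝ := sSup T with hr
    have hr0 : 0 ≤ r := le_trans (snd_mem x0).1 (le_csSup Tbd ⟨x0, ⟨hx0S, hx0β⟩, rfl⟩)
    by_cases hr1 : r < 1
    · refine ⟨mk β hβlt r ⟨hr0, hr1⟩, ?_, ?_⟩
      · intro x hx
        rcases lt_or_eq_of_le (hβub x hx) with h | h
        · exact (le_def _ _).2 (Or.inl (by simpa using h))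
        · exact (le_def _ _).2 (Or.inr ⟨by simpa using h,
            by simpa using le_csSup Tbd ⟨x, ⟨hx, h⟩, rfl⟩⟩)
      · intro u hu
        rcases lt_or_eq_of_le (hβle u hu) with h | h
        · exact (le_def _ _).2 (Or.inl (by simpa using h))
        · refine (le_def _ _).2 (Or.inr ⟨by simpa using h, ?_⟩)
          simp only [snd_mk]
          refine csSup_le Tne ?_
          rintro t ⟨x, ⟨hxS, hxβ⟩, rfl⟩
          exact snd_le_of_le (hu hxS) (hxβ.trans h)
    · refine ⟨mk (β + 1) (succ_lt hβlt) 0 (by constructor <;> norm_num), ?_, ?_⟩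
      · intro x hx
        exact (le_def _ _).2 (Or.inl (by simpa using lt_of_le_of_lt (hβub x hx) (lt_add_one β)))
      · intro u hu
        have h1 : β < fst u := by
          rcases lt_or_eq_of_le (hβle u hu) with h | h
          · exact h
          · exfalso
            have : r ≤ snd u := csSup_le Tne (by
              rintro t ⟨x, ⟨hxS, hxβ⟩, rfl⟩
              exact snd_le_of_le (hu hxS) (hxβ.trans h))
            exact absurd (lt_of_le_of_lt this (snd_mem u).2) (by simpa using hr1)
        have h2 : β + 1 ≤ fst u := by
          rw [Ordinal.add_one_eq_succ]; exact Order.succ_le_of_lt h1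
        rcases lt_or_eq_of_le h2 with h | h
        · exact (le_def _ _).2 (Or.inl (by simpa using h))
        · exact (le_def _ _).2 (Or.inr ⟨by simpa using h, by simpa using (snd_mem u).1⟩)
  · refine ⟨mk β hβlt 0 (by constructor <;> norm_num), ?_, ?_⟩
    · intro x hx
      have : fst x ≠ β := fun h => hmem ⟨x, hx, h⟩
      exact (le_def _ _).2 (Or.inl (by simpa using lt_of_le_of_ne (hβub x hx) this))
    · intro u hu
      rcases lt_or_eq_of_le (hβle u hu) with h | h
      · exact (le_def _ _).2 (Or.inl (by simpa using h))
      · exact (le_def _ _).2 (Or.inr ⟨by simpa using h, by simpa using (snd_mem u).1⟩)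

lemma exists_isGLB {S : Set LongRay} (hne : S.Nonempty) : ∃ l, IsGLB S l := by
  set A : Set Ordinal := fst '' S with hA
  have Ane : A.Nonempty := hne.image _
  set β : Ordinal := sInf A with hβ
  obtain ⟨x0, hx0S, hx0β⟩ : β ∈ A := csInf_mem Ane
  have hβlt : β < omega1 := hx0β ▸ fst_lt x0
  have hβlb : ∀ x ∈ S, β ≤ fst x := fun x hx => csInf_le (OrderBot.bddBelow A) ⟨x, hx, rfl⟩
  set T : Set ℝ := snd '' {x ∈ S | fst x = β} with hT
  have Tne : T.Nonempty := ⟨snd x0, x0, ⟨hx0S, hx0β⟩, rfl⟩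
  have Tbd : BddBelow T := ⟨0, by rintro t ⟨x, _, rfl⟩; exact (snd_mem x).1⟩
  set r : ℝ := sInf T with hr
  have hr0 : 0 ≤ r := le_csInf Tne (by rintro t ⟨x, _, rfl⟩; exact (snd_mem x).1)
  have hr1 : r < 1 := lt_of_le_of_lt (csInf_le Tbd ⟨x0, ⟨hx0S, hx0β⟩, rfl⟩) (snd_mem x0).2
  refine ⟨mk β hβlt r ⟨hr0, hr1⟩, ?_, ?_⟩
  · intro x hx
    rcases lt_or_eq_of_le (hβlb x hx) with h | h
    · exact (le_def _ _).2 (Or.inl (by simpa using h))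
    · exact (le_def _ _).2 (Or.inr ⟨by simpa using h,
        by simpa using csInf_le Tbd ⟨x, ⟨hx, h.symm⟩, rfl⟩⟩)
  · intro w hw
    have h1 : fst w ≤ β := hx0β ▸ fst_le_of_le (hw hx0S)
    rcases lt_or_eq_of_le h1 with h | h
    · exact (le_def _ _).2 (Or.inl (by simpa using h))
    · refine (le_def _ _).2 (Or.inr ⟨by simpa using h, ?_⟩)
      simp only [snd_mk]
      refine le_csInf Tne ?_
      rintro t ⟨x, ⟨hxS, hxβ⟩, rfl⟩
      exact snd_le_of_le (hw hxS) (h.trans hxβ.symm)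

end LR2

namespace LR3
open LR LR2

lemma countable_Iic_ord {β : Ordinal.{0}} (hβ : β < omega1) : Countable (Set.Iic β) := by
  have h1 : Set.Iic β = Set.Iio (Order.succ β) := (Order.Iio_succ β).symm
  have h2 : (Cardinal.mk (Set.Iic β)) = Cardinal.lift.{1} (Order.succ β).card := by
    rw [h1, Ordinal.mk_Iio_ordinal]
  rw [← Cardinal.mk_le_aleph0_iff, h2, ← Cardinal.lift_aleph0.{1,0}, Cardinal.lift_le]
  have hs : Order.succ β < omega1 := by
    rw [← Ordinal.add_one_eq_succ]; exact succ_lt hβ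
  rw [omega1_eq, Cardinal.lt_ord] at hs
  have haleph : (Cardinal.aleph 1) = Order.succ Cardinal.aleph0 := by
    have h0 := Cardinal.aleph_succ 0
    rw [Cardinal.aleph_zero] at h0
    rw [← h0]
    norm_num
  rw [haleph, Order.lt_succ_iff] at hs
  exact hs

lemma countable_rat_below (b : LongRay) :
    {x : LongRay | x ≤ b ∧ ∃ q : ℚ, snd x = q}.Countable := by
  have : Countable (Set.Iic (fst b)) := countable_Iic_ord (fst_lt b)
  set F : (Set.Iic (fst b)) × ℚ → LongRay := fun p =>
    if h : ((p.2 : ℝ)) ∈ Set.Ico (0:ℝ) 1 then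
      mk p.1.1 (lt_of_le_of_lt p.1.2 (fst_lt b)) p.2 (Set.mem_Ico.1 h) else 0 with hF
  refine (Set.countable_range F).mono ?_
  rintro x ⟨hxb, q, hq⟩
  refine ⟨(⟨fst x, Set.mem_Iic.2 (fst_le_of_le hxb)⟩, q), ?_⟩
  have hmem : ((q : ℝ)) ∈ Set.Ico (0:ℝ) 1 := hq ▸ snd_mem x
  simp only [hF, dif_pos hmem]
  exact (LR.ext (by simp) (by simp [hq])).symm

lemma monotone_attains {h : LongRay → LongRay} (hm : Monotone h) {l : LongRay}
    (hl : IsLUB (Set.range h) l) : ∃ x, h x = l := by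
  classical
  set D : Set LongRay := {d | d < l ∧ ∃ q : ℚ, snd d = q} with hD
  have hDc : D.Countable := (countable_rat_below l).mono (by
    intro d hd
    rw [hD, Set.mem_setOf_eq] at hd
    exact Set.mem_setOf_eq ▸ ⟨hd.1.le, hd.2⟩)
  set c : LongRay → LongRay := fun d => if hd : ∃ y, d < h y then hd.choose else 0 with hc
  obtain ⟨x', hx'⟩ := countable_bddAbove (hDc.image c)
  have hkey : ∀ d ∈ D, d < h x' := by
    intro d hd
    rw [hD, Set.mem_setOf_eq] at hd
    have hnub : ∃ y, d < h y := by
      by_contra hub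
      push_neg at hub
      exact absurd (hl.2 (by rintro y ⟨z, rfl⟩; exact hub z)) (not_le_of_gt hd.1)
    have h1 : d < h (c d) := by rw [hc]; simpa only [dif_pos hnub] using hnub.choose_spec
    refine lt_of_lt_of_le h1 (hm (hx' _ (Set.mem_image_of_mem c ?_)))
    rw [hD, Set.mem_setOf_eq]; exact hd
  refine ⟨x', ?_⟩
  rcases lt_or_eq_of_le (hl.1 ⟨x', rfl⟩) with hlt | heq
  · exfalso
    have hnub : ∃ y, h x' < h y := by
      by_contra hub
      push_neg at hub
      exact absurd (hl.2 (by rintro y ⟨z, rfl⟩; exact hub z)) (not_le_of_gt hlt)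
    obtain ⟨y, hy⟩ := hnub
    obtain ⟨z, hz1, hz2, hz3⟩ := exists_rat_between hy
    have hzD : z ∈ D := by
      rw [hD, Set.mem_setOf_eq]
      exact ⟨lt_of_lt_of_le hz2 (hl.1 ⟨y, rfl⟩), hz3⟩
    exact absurd (hkey z hzD) (not_lt_of_gt hz1)
  · exact heq

lemma antitone_attains {h : LongRay → LongRay} (hm : Antitone h) {l : LongRay}
    (hl : IsGLB (Set.range h) l) : ∃ x, h x = l := by
  classical
  set D : Set LongRay := {d | l < d ∧ d ≤ h 0 ∧ ∃ q : ℚ, snd d = q} with hD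
  have hDc : D.Countable := (countable_rat_below (h 0)).mono (by
    intro d hd
    rw [hD, Set.mem_setOf_eq] at hd
    exact Set.mem_setOf_eq ▸ ⟨hd.2.1, hd.2.2⟩)
  set c : LongRay → LongRay := fun d => if hd : ∃ y, h y < d then hd.choose else 0 with hc
  obtain ⟨x', hx'⟩ := countable_bddAbove (hDc.image c)
  have hkey : ∀ d ∈ D, h x' < d := by
    intro d hd
    rw [hD, Set.mem_setOf_eq] at hd
    have hnlb : ∃ y, h y < d := by
      by_contra hlb
      push_neg at hlb
      exact absurd (hl.2 (by rintro y ⟨z, rfl⟩; exact hlb z)) (not_le_of_gt hd.1)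
    have h1 : h (c d) < d := by rw [hc]; simpa only [dif_pos hnlb] using hnlb.choose_spec
    refine lt_of_le_of_lt (hm (hx' _ (Set.mem_image_of_mem c ?_))) h1
    rw [hD, Set.mem_setOf_eq]; exact hd
  refine ⟨x', ?_⟩
  rcases lt_or_eq_of_le (hl.1 ⟨x', rfl⟩) with hlt | heq
  · exfalso
    have hnlb : ∃ y, h y < h x' := by
      by_contra hlb
      push_neg at hlb
      exact absurd (hl.2 (by rintro y ⟨z, rfl⟩; exact hlb z)) (not_le_of_gt hlt)
    obtain ⟨y, hy⟩ := hnlb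
    obtain ⟨z, hz1, hz2, hz3⟩ := exists_rat_between hy
    have hzD : z ∈ D := by
      rw [hD, Set.mem_setOf_eq]
      exact ⟨lt_of_le_of_lt (hl.1 ⟨y, rfl⟩) hz1,
        le_of_lt (lt_of_lt_of_le hz2 (hm (zero_le x'))), hz3⟩
    exact absurd (hkey z hzD) (not_lt_of_gt hz2)
  · exact heq.symm

end LR3

namespace LR4
open LR LR2 LR3 Filter

lemma eventually_const {g : LongRay → LongRay} (hg : Continuous g) (b : LongRay)
    (hb : ∀ x, g x ≤ b) : ∃ α, ∀ x, α ≤ x → g x = g α := by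
  classical
  have hMex : ∀ x, ∃ l, IsLUB (g '' Set.Ici x) l := fun x =>
    exists_isLUB ⟨g x, ⟨x, Set.self_mem_Ici, rfl⟩⟩ ⟨b, by rintro y ⟨z, _, rfl⟩; exact hb z⟩
  have hmex : ∀ x, ∃ l, IsGLB (g '' Set.Ici x) l := fun x =>
    exists_isGLB ⟨g x, ⟨x, Set.self_mem_Ici, rfl⟩⟩
  set M : LongRay → LongRay := fun x => (hMex x).choose with hM
  set m : LongRay → LongRay := fun x => (hmex x).choose with hm
  have hMs : ∀ x, IsLUB (g '' Set.Ici x) (M x) := fun x => (hMex x).choose_spec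
  have hms : ∀ x, IsGLB (g '' Set.Ici x) (m x) := fun x => (hmex x).choose_spec
  have hMant : Antitone M := by
    intro x y hxy
    refine (hMs y).2 ?_
    rintro z ⟨w, hw, rfl⟩
    exact (hMs x).1 ⟨w, le_trans hxy hw, rfl⟩
  have hmmono : Monotone m := by
    intro x y hxy
    refine (hms y).2 ?_
    rintro z ⟨w, hw, rfl⟩
    exact (hms x).1 ⟨w, le_trans hxy hw, rfl⟩
  obtain ⟨lM, hlM⟩ := exists_isGLB (Set.range_nonempty M)
  obtain ⟨x1, hx1⟩ := antitone_attains hMant hlM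
  obtain ⟨lm, hlm⟩ := exists_isLUB (Set.range_nonempty m)
    ⟨b, by rintro z ⟨x, rfl⟩; exact le_trans ((hms x).1 ⟨x, Set.self_mem_Ici, rfl⟩) (hb x)⟩
  obtain ⟨x2, hx2⟩ := monotone_attains hmmono hlm
  have hMconst : ∀ x, x1 ≤ x → M x = lM := fun x hx =>
    le_antisymm (hx1 ▸ hMant hx) (hlM.1 ⟨x, rfl⟩)
  have hmconst : ∀ x, x2 ≤ x → m x = lm := fun x hx =>
    le_antisymm (hlm.1 ⟨x, rfl⟩) (hx2 ▸ hmmono hx)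
  set α := max x1 x2 with hα
  have hgM : ∀ x, g x ≤ M x := fun x => (hMs x).1 ⟨x, Set.self_mem_Ici, rfl⟩
  have hgm : ∀ x, m x ≤ g x := fun x => (hms x).1 ⟨x, Set.self_mem_Ici, rfl⟩
  have hlmM : lm ≤ lM := by
    calc lm = m α := (hmconst α (le_max_right _ _)).symm
    _ ≤ g α := hgm α
    _ ≤ M α := hgM α
    _ = lM := hMconst α (le_max_left _ _)
  rcases eq_or_lt_of_le hlmM with heq | hlt
  · refine ⟨α, fun x hx => ?_⟩
    have key : ∀ y, α ≤ y → g y = lM := by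
      intro y hy
      refine le_antisymm ?_ ?_
      · rw [← hMconst y (le_trans (le_max_left _ _) hy)]; exact hgM y
      · rw [← heq, ← hmconst y (le_trans (le_max_right _ _) hy)]; exact hgm y
    rw [key x hx, key α le_rfl]
  · exfalso
    obtain ⟨c, hc1, hc2, -⟩ := exists_rat_between hlt
    obtain ⟨d, hd1, hd2, -⟩ := exists_rat_between hc2
    have Hd : ∀ x, ∃ z, x < z ∧ d < g z := by
      intro x
      obtain ⟨x', hx'⟩ := exists_gt (max x α)
      have hMx' : M x' = lM := hMconst x' (le_trans (le_max_left _ _)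
        (le_trans (le_max_right x α) hx'.le))
      have : ¬ (d ∈ upperBounds (g '' Set.Ici x')) := by
        intro hub
        have hcon : lM ≤ d := hMx' ▸ (hMs x').2 hub
        exact absurd hcon (not_le_of_gt hd2)
      rw [upperBounds, Set.mem_setOf_eq] at this
      push_neg at this
      obtain ⟨z, ⟨w, hw, rfl⟩, hz⟩ := this
      exact ⟨w, lt_of_le_of_lt (le_max_left x α) (lt_of_lt_of_le hx' hw), hz⟩
    have Hc : ∀ x, ∃ z, x < z ∧ g z < c := by
      intro x
      obtain ⟨x', hx'⟩ := exists_gt (max x α)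
      have hmx' : m x' = lm := hmconst x' (le_trans (le_max_right _ _)
        (le_trans (le_max_right x α) hx'.le))
      have : ¬ (c ∈ lowerBounds (g '' Set.Ici x')) := by
        intro hlb
        have hcon : c ≤ lm := hmx' ▸ (hms x').2 hlb
        exact absurd hcon (not_le_of_gt hc1)
      rw [lowerBounds, Set.mem_setOf_eq] at this
      push_neg at this
      obtain ⟨z, ⟨w, hw, rfl⟩, hz⟩ := this
      exact ⟨w, lt_of_le_of_lt (le_max_left x α) (lt_of_lt_of_le hx' hw), hz⟩
    set w : ℕ → LongRay := fun n =>
      Nat.rec α (fun n wn => if Even n then (Hd wn).choose else (Hc wn).choose) n with hwdef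
    have hw : ∀ n, w (n+1) = if Even n then (Hd (w n)).choose else (Hc (w n)).choose :=
      fun n => rfl
    have hmono : StrictMono w := by
      apply strictMono_nat_of_lt_succ
      intro n
      rw [hw]
      split
      · exact (Hd (w n)).choose_spec.1
      · exact (Hc (w n)).choose_spec.1
    obtain ⟨B, hB⟩ := countable_bddAbove (Set.countable_range w)
    obtain ⟨s, hs⟩ := exists_isLUB (Set.range_nonempty w) ⟨B, fun z hz => hB z hz⟩
    have ht : Tendsto w atTop (𝓝 s) := tendsto_atTop_isLUB hmono.monotone hs
    have hgt : Tendsto (g ∘ w) atTop (𝓝 (g s)) := (hg.tendsto s).comp ht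
    have hodd : ∀ k, d < g (w (2*k+1)) := by
      intro k
      rw [hw, if_pos (even_two_mul k)]
      exact (Hd (w (2*k))).choose_spec.2
    have heven : ∀ k, g (w (2*k+2)) < c := by
      intro k
      rw [hw, if_neg (by simp [Nat.even_add_one, even_two_mul] : ¬ Even (2*k+1))]
      exact (Hc (w (2*k+1))).choose_spec.2
    have t2k : Tendsto (fun k : ℕ => 2*k+1) atTop atTop := by
      refine tendsto_atTop_mono (fun k => ?_) tendsto_id
      simp only [id_eq]; omega
    have t2k' : Tendsto (fun k : ℕ => 2*k+2) atTop atTop := by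
      refine tendsto_atTop_mono (fun k => ?_) tendsto_id
      simp only [id_eq]; omega
    have hds : d ≤ g s := ge_of_tendsto' (hgt.comp t2k) (fun k => (hodd k).le)
    have hcs : g s ≤ c := le_of_tendsto' (hgt.comp t2k') (fun k => (heven k).le)
    exact absurd (lt_of_le_of_lt (le_trans hds hcs) hd1) (by simp)

end LR4

/-- A map `R → R` is cofinal if its image is unbounded in `R`. -/
def Cofinal (f : LongRay → LongRay) : Prop := ∀ b, ∃ x, b ≤ f x

/-- A map `R → R` is bounded if its image has an upper bound in `R`. -/
def BddMap (f : LongRay → LongRay) : Prop := ∃ b, ∀ x, f x ≤ b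

/-- Any continuous embedding `R → R²` has at least one cofinal coordinate projection:
the direction `(0,0)` is not realized. -/
theorem embedding_squared_has_cofinal_coord (f : LongRay → LongRay × LongRay)
    (hf : Topology.IsEmbedding f) :
    Cofinal (fun x => (f x).1) ∨ Cofinal (fun x => (f x).2) := by
  by_contra hcon
  push_neg at hcon
  obtain ⟨h1, h2⟩ := hcon
  rw [Cofinal] at h1 h2
  push_neg at h1 h2
  obtain ⟨b1, hb1⟩ := h1
  obtain ⟨b2, hb2⟩ := h2
  obtain ⟨α1, hα1⟩ := LR4.eventually_const (hf.continuous.fst) b1 (fun x => (hb1 x).le)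
  obtain ⟨α2, hα2⟩ := LR4.eventually_const (hf.continuous.snd) b2 (fun x => (hb2 x).le)
  obtain ⟨y, hy⟩ := LR.exists_gt (max α1 α2)
  have h1' : (f y).1 = (f (max α1 α2)).1 := by
    rw [hα1 y (le_trans (le_max_left _ _) hy.le), hα1 (max α1 α2) (le_max_left _ _)]
  have h2' : (f y).2 = (f (max α1 α2)).2 := by
    rw [hα2 y (le_trans (le_max_right _ _) hy.le), hα2 (max α1 α2) (le_max_right _ _)]
  have : f y = f (max α1 α2) := Prod.ext h1' h2'
  exact absurd (hf.injective this) (ne_of_gt hy)
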